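/- For every integer λ ≥ 1, the identity (1:u)_λ·(1:u)_1·w_λ·w₁ = [λ+1]·(1:u)_{λ+1}·w_{λ+1} + (1:u)_1·(1:u)_{λ−1}·w_{λ−1} holds in the Laurent polynomial ring ℚ(u)[z, z^{−1}] over the field of rational functions ℚ(u), where [λ+1] := (1−u^{λ+1})/(1−u). -/

import Mathlib

set_option maxRecDepth 4000


open Polynomial Finset

/-- The Gaussian binomial coefficient `[n; k] ∈ ℤ[u]`, defined as
`∏_{i=1}^{k} (1 − u^{n−i+1})/(1 − u^i)` for `0 ≤ k ≤ n`, and `0` otherwise. -/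
noncomputable def gb (n : ℕ) (k : ℤ) : Polynomial ℤ :=
  if 0 ≤ k ∧ k ≤ (n : ℤ) then
    (∏ i ∈ Finset.Icc 1 k.toNat, ((X : Polynomial ℤ) ^ (n - i + 1) - 1)) /ₘ
      (∏ i ∈ Finset.Icc 1 k.toNat, ((X : Polynomial ℤ) ^ i - 1))
  else 0

/-- The canonical embedding `ℤ[u] → ℚ(u)`. -/
noncomputable def iQ : Polynomial ℤ →+* RatFunc ℚ :=
  (algebraMap (Polynomial ℚ) (RatFunc ℚ)).comp (Polynomial.mapRingHom (Int.castRingHom ℚ))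

/-- `(1:u)_n := ∏_{i=1}^{n} (1 − u^i)⁻¹` in `ℚ(u)`. -/
noncomputable def poch (n : ℕ) : RatFunc ℚ :=
  ∏ i ∈ Finset.Icc 1 n, (1 - RatFunc.X ^ i)⁻¹

/-- `w_λ := Σ_{p=0}^{λ} [λ; p]·z^{λ−2p}`, viewed in `ℚ(u)[z, z⁻¹]`. -/
noncomputable def wloc (l : ℕ) : LaurentPolynomial (RatFunc ℚ) :=
  ∑ p ∈ Finset.range (l + 1),
    LaurentPolynomial.C (iQ (gb l p)) * LaurentPolynomial.T ((l : ℤ) - 2 * p)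

lemma prod_Icc_one {M : Type*} [CommMonoid M] (f : ℕ → M) (k : ℕ) :
    ∏ i ∈ Icc 1 k, f i = ∏ i ∈ range k, f (i + 1) := by
  induction k with
  | zero => simp
  | succ k ih =>
    rw [Finset.prod_Icc_succ_top (by omega), ih, Finset.prod_range_succ]

/-- numerator product over range -/
noncomputable def Nm (n p : ℕ) : Polynomial ℤ := ∏ i ∈ range p, ((X : Polynomial ℤ) ^ (n - i) - 1)
noncomputable def Dm (p : ℕ) : Polynomial ℤ := ∏ i ∈ range p, ((X : Polynomial ℤ) ^ (i+1) - 1)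

lemma Nm_reflect (n : ℕ) : Nm n n = Dm n := by
  unfold Nm Dm
  rw [← Finset.prod_range_reflect (fun i => (X : Polynomial ℤ) ^ (i+1) - 1) n]
  apply Finset.prod_congr rfl
  intro i hi
  simp only [Finset.mem_range] at hi
  congr 2
  omega

lemma Nm_succ_top (n p : ℕ) : Nm n (p+1) = Nm n p * ((X : Polynomial ℤ)^(n-p) - 1) :=
  Finset.prod_range_succ _ _

lemma Nm_succ_bot (n p : ℕ) : Nm (n+1) (p+1) = Nm n p * ((X : Polynomial ℤ)^(n+1) - 1) := by
  unfold Nm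
  rw [Finset.prod_range_succ' (fun i => (X : Polynomial ℤ) ^ (n+1-i) - 1) p]
  simp only [Nat.sub_zero]
  congr 1
  apply Finset.prod_congr rfl
  intro i hi; congr 2; omega

lemma Dm_succ (p : ℕ) : Dm (p+1) = Dm p * ((X : Polynomial ℤ)^(p+1) - 1) :=
  Finset.prod_range_succ _ _

lemma ddvd : ∀ n p : ℕ, p ≤ n → Dm p ∣ Nm n p := by
  intro n
  induction n with
  | zero => intro p hp; obtain rfl : p = 0 := Nat.le_zero.mp hp; simp [Nm, Dm]
  | succ n ih =>
    intro p hp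
    match p, hp with
    | 0, _ => simp [Nm, Dm]
    | p+1, hp =>
      rcases eq_or_lt_of_le hp with h | h
      · obtain rfl : p = n := by omega
        rw [Nm_reflect]
      · -- p + 1 ≤ n
        have hpn : p + 1 ≤ n := by omega
        have key : Nm (n+1) (p+1) = ((X : Polynomial ℤ)^(p+1) - 1) * Nm n p
            + (X : Polynomial ℤ)^(p+1) * Nm n (p+1) := by
          rw [Nm_succ_bot, Nm_succ_top]
          have hx : (X : Polynomial ℤ)^(p+1) * (X : Polynomial ℤ)^(n-p) = X^(n+1) := by
            rw [← pow_add]; congr 1; omega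
          linear_combination (-(Nm n p)) * hx
        rw [key]
        apply dvd_add
        · rw [Dm_succ, mul_comm]
          exact mul_dvd_mul_left _ (ih p (by omega))
        · exact Dvd.dvd.mul_left (ih (p+1) hpn) _

noncomputable def NQ (n p : ℕ) : RatFunc ℚ := ∏ i ∈ range p, (1 - RatFunc.X ^ (n - i))
noncomputable def DQ (p : ℕ) : RatFunc ℚ := ∏ i ∈ range p, (1 - RatFunc.X ^ (i + 1))

lemma one_sub_X_pow_ne (k : ℕ) (hk : 1 ≤ k) : (1 : RatFunc ℚ) - RatFunc.X ^ k ≠ 0 := by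
  have h : (1 : RatFunc ℚ) - RatFunc.X ^ k =
      algebraMap (Polynomial ℚ) (RatFunc ℚ) (1 - X ^ k) := by
    simp [map_sub, map_pow, RatFunc.algebraMap_X]
  rw [h, ne_eq, map_eq_zero_iff _ (RatFunc.algebraMap_injective ℚ)]
  intro hc
  apply X_pow_sub_C_ne_zero (show 0 < k by omega) (1:ℚ)
  rw [map_one]
  linear_combination -hc

lemma DQ_ne (p : ℕ) : DQ p ≠ 0 := by
  unfold DQ
  exact Finset.prod_ne_zero_iff.mpr fun i _ => one_sub_X_pow_ne (i+1) (by omega)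

lemma Dm_monic (p : ℕ) : (Dm p).Monic := by
  unfold Dm
  apply monic_prod_of_monic
  intro i _
  simpa using monic_X_pow_sub_C (1 : ℤ) (by omega : i + 1 ≠ 0)

lemma gb_mul (n p : ℕ) (hp : p ≤ n) : gb n (p : ℤ) * Dm p = Nm n p := by
  have hif : gb n (p : ℤ) = Nm n p /ₘ Dm p := by
    unfold gb Nm Dm
    rw [if_pos ⟨Int.ofNat_nonneg p, Int.ofNat_le.mpr hp⟩]
    rw [Int.toNat_natCast]
    rw [prod_Icc_one (fun i => (X : Polynomial ℤ) ^ (n - i + 1) - 1) p,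
        prod_Icc_one (fun i => (X : Polynomial ℤ) ^ i - 1) p]
    congr 1
    apply Finset.prod_congr rfl
    intro i hi
    simp only [Finset.mem_range] at hi
    congr 2
    omega
  rw [hif]
  have h0 := Polynomial.modByMonic_add_div (Nm n p) (Dm p)
  have hd : Nm n p %ₘ Dm p = 0 :=
    (Polynomial.modByMonic_eq_zero_iff_dvd (Dm_monic p)).mpr (ddvd n p hp)
  rw [hd, zero_add] at h0
  rw [mul_comm]; exact h0

lemma iQ_X_pow_sub (k : ℕ) : iQ ((X : Polynomial ℤ) ^ k - 1) = -(1 - RatFunc.X ^ k) := by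
  unfold iQ
  simp [map_sub, map_pow, RatFunc.algebraMap_X]

lemma prod_neg' {R : Type*} [CommRing R] (f : ℕ → R) (p : ℕ) :
    ∏ i ∈ range p, -(f i) = (-1)^p * ∏ i ∈ range p, f i := by
  induction p with
  | zero => simp
  | succ p ih => rw [Finset.prod_range_succ, Finset.prod_range_succ, ih, pow_succ]; ring

lemma gbq_mul (n p : ℕ) (hp : p ≤ n) : iQ (gb n (p : ℤ)) * DQ p = NQ n p := by
  have := congrArg iQ (gb_mul n p hp)
  rw [map_mul] at this
  have hD : iQ (Dm p) = (-1)^p * DQ p := by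
    unfold Dm DQ
    rw [map_prod]
    rw [Finset.prod_congr rfl (fun i _ => iQ_X_pow_sub (i+1))]
    exact prod_neg' _ p
  have hN : iQ (Nm n p) = (-1)^p * NQ n p := by
    unfold Nm NQ
    rw [map_prod]
    rw [Finset.prod_congr rfl (fun i _ => iQ_X_pow_sub (n - i))]
    exact prod_neg' _ p
  rw [hD, hN] at this
  have hne : ((-1 : RatFunc ℚ))^p ≠ 0 := by
    apply pow_ne_zero; exact neg_ne_zero.mpr one_ne_zero
  have h2 : (-1 : RatFunc ℚ)^p * (iQ (gb n (p : ℤ)) * DQ p) = (-1)^p * NQ n p := by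
    linear_combination this
  exact mul_left_cancel₀ hne h2

lemma gb_out (n : ℕ) (k : ℤ) (hk : ¬(0 ≤ k ∧ k ≤ (n : ℤ))) : gb n k = 0 := if_neg hk

noncomputable def gq (n : ℕ) (k : ℤ) : RatFunc ℚ := iQ (gb n k)

lemma NQ_succ_top (n p : ℕ) : NQ n (p+1) = NQ n p * (1 - RatFunc.X^(n-p)) :=
  Finset.prod_range_succ _ _

lemma NQ_succ_bot (n p : ℕ) : NQ (n+1) (p+1) = NQ n p * (1 - RatFunc.X^(n+1)) := by
  unfold NQ
  rw [Finset.prod_range_succ' (fun i => 1 - RatFunc.X ^ (n+1-i)) p]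
  simp only [Nat.sub_zero]
  congr 1
  apply Finset.prod_congr rfl
  intro i hi; congr 2; omega

lemma DQ_succ (p : ℕ) : DQ (p+1) = DQ p * (1 - RatFunc.X^(p+1)) :=
  Finset.prod_range_succ _ _

lemma NQ_reflect (n : ℕ) : NQ n n = DQ n := by
  unfold NQ DQ
  rw [← Finset.prod_range_reflect (fun i => 1 - RatFunc.X ^ (i+1)) n]
  apply Finset.prod_congr rfl
  intro i hi
  simp only [Finset.mem_range] at hi
  congr 2
  omega

lemma gq_zero (n : ℕ) : gq n 0 = 1 := by
  have h := gbq_mul n 0 (Nat.zero_le n)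
  have : ((0:ℕ):ℤ) = 0 := rfl
  rw [this] at h
  simpa [NQ, DQ, gq] using h

lemma gq_diag (n : ℕ) : gq n n = 1 := by
  have h := gbq_mul n n le_rfl
  rw [NQ_reflect] at h
  have := DQ_ne n
  field_simp at h
  exact h

lemma gq_out (n : ℕ) (k : ℤ) (hk : ¬(0 ≤ k ∧ k ≤ (n : ℤ))) : gq n k = 0 := by
  unfold gq
  rw [gb_out n k hk, map_zero]

lemma keyid (lam p : ℕ) (hlam : 1 ≤ lam) (hp : p ≤ lam + 1) :
    gq lam p + gq lam ((p:ℤ) - 1) =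
      gq (lam+1) p + (1 - RatFunc.X^lam) * gq (lam-1) ((p:ℤ) - 1) := by
  obtain _ | q := p
  · simp only [Nat.cast_zero]
    rw [gq_zero, gq_zero]
    have h1 : gq lam ((0:ℤ) - 1) = 0 := gq_out _ _ (by omega)
    have h2 : gq (lam-1) ((0:ℤ) - 1) = 0 := gq_out _ _ (by omega)
    rw [h1, h2]; ring
  · have hcast : ((q+1:ℕ):ℤ) - 1 = ((q:ℕ):ℤ) := by push_cast; ring
    rw [hcast]
    rcases eq_or_lt_of_le hp with h | h
    · have h' : q = lam := by omega
      subst h'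
      have h1 : gq q ((q+1:ℕ):ℤ) = 0 := gq_out _ _ (by push_cast; omega)
      have h2 : gq (q-1) ((q:ℕ):ℤ) = 0 := gq_out _ _ (by
        have : ((q-1:ℕ):ℤ) = (q:ℤ) - 1 := by omega
        omega)
      rw [h1, h2, gq_diag, gq_diag]; ring
    · -- q + 1 ≤ lam
      have hq1 : q + 1 ≤ lam := by omega
      have m1 := gbq_mul lam (q+1) hq1
      have m2 := gbq_mul lam q (by omega)
      have m3 := gbq_mul (lam+1) (q+1) (by omega)
      have m4 := gbq_mul (lam-1) q (by omega)
      have e1 : NQ lam (q+1) = NQ lam q * (1 - RatFunc.X^(lam-q)) := NQ_succ_top lam q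
      have e2 : NQ (lam+1) (q+1) = NQ lam q * (1 - RatFunc.X^(lam+1)) := NQ_succ_bot lam q
      have e3 : NQ lam (q+1) = NQ (lam-1) q * (1 - RatFunc.X^lam) := by
        have := NQ_succ_bot (lam-1) q
        rw [(by omega : lam - 1 + 1 = lam)] at this
        exact this
      have e4 : DQ (q+1) = DQ q * (1 - RatFunc.X^(q+1)) := DQ_succ q
      have hx : (RatFunc.X : RatFunc ℚ)^(lam-q) * RatFunc.X^(q+1) = RatFunc.X^(lam+1) := by
        rw [← pow_add]; congr 1; omega
      rw [e4, e1, ← m2] at m1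
      rw [e4, e2, ← m2] at m3
      have m4' : (1 - RatFunc.X^lam) * (iQ (gb (lam-1) (q:ℤ)) * DQ q)
          = iQ (gb lam (q:ℤ)) * DQ q * (1 - RatFunc.X^(lam-q)) := by
        rw [m4, mul_comm, ← e3, e1, ← m2]
      have hβ : (1 : RatFunc ℚ) - RatFunc.X^(q+1) ≠ 0 := one_sub_X_pow_ne (q+1) (by omega)
      apply mul_right_cancel₀ (mul_ne_zero hβ (DQ_ne q))
      unfold gq
      linear_combination m1 - m3 - (1 - RatFunc.X^(q+1)) * m4' - iQ (gb lam (q:ℤ)) * DQ q * hx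

lemma poch_one : poch 1 = (1 - RatFunc.X)⁻¹ := by
  unfold poch
  rw [show Finset.Icc 1 1 = {1} from rfl]
  simp

lemma poch_succ (n : ℕ) : poch (n+1) = poch n * (1 - RatFunc.X^(n+1))⁻¹ := by
  unfold poch
  rw [Finset.prod_Icc_succ_top (by omega)]

lemma one_sub_X_ne : (1 : RatFunc ℚ) - RatFunc.X ≠ 0 := by
  have := one_sub_X_pow_ne 1 le_rfl
  rwa [pow_one] at this

lemma scalar1 (lam : ℕ) :
    (1 - RatFunc.X ^ (lam + 1)) / (1 - RatFunc.X) * poch (lam + 1) = poch lam * poch 1 := by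
  rw [poch_succ, poch_one, div_eq_mul_inv]
  have h1 : (1 : RatFunc ℚ) - RatFunc.X^(lam+1) ≠ 0 := one_sub_X_pow_ne (lam+1) (by omega)
  calc (1 - RatFunc.X^(lam+1)) * (1 - RatFunc.X)⁻¹ * (poch lam * (1 - RatFunc.X^(lam+1))⁻¹)
      = ((1 - RatFunc.X^(lam+1)) * (1 - RatFunc.X^(lam+1))⁻¹) * (poch lam * (1 - RatFunc.X)⁻¹) := by
        ring
    _ = poch lam * (1 - RatFunc.X)⁻¹ := by rw [mul_inv_cancel₀ h1, one_mul]

lemma scalar2 (lam : ℕ) (hlam : 1 ≤ lam) :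
    poch 1 * poch (lam - 1) = poch lam * poch 1 * (1 - RatFunc.X ^ lam) := by
  have h : poch lam = poch (lam-1) * (1 - RatFunc.X^lam)⁻¹ := by
    have := poch_succ (lam-1)
    rwa [(by omega : lam - 1 + 1 = lam)] at this
  have h1 : (1 : RatFunc ℚ) - RatFunc.X^lam ≠ 0 := one_sub_X_pow_ne lam hlam
  rw [h]
  calc poch 1 * poch (lam-1)
      = (poch (lam-1) * ((1 - RatFunc.X^lam)⁻¹ * (1 - RatFunc.X^lam))) * poch 1 := by
        rw [inv_mul_cancel₀ h1]; ring
    _ = poch (lam-1) * (1 - RatFunc.X^lam)⁻¹ * poch 1 * (1 - RatFunc.X^lam) := by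
        ring

/-- For every integer `λ ≥ 1`, the identity
`(1:u)_λ·(1:u)_1·w_λ·w₁ = [λ+1]·(1:u)_{λ+1}·w_{λ+1} + (1:u)_1·(1:u)_{λ−1}·w_{λ−1}`
holds in `ℚ(u)[z, z⁻¹]`, where `[λ+1] := (1 − u^{λ+1})/(1 − u)`. -/
theorem stmt_2 (lam : ℕ) (hlam : 1 ≤ lam) :
    LaurentPolynomial.C (poch lam * poch 1) * (wloc lam * wloc 1) =
      LaurentPolynomial.C ((1 - RatFunc.X ^ (lam + 1)) / (1 - RatFunc.X) * poch (lam + 1)) *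
          wloc (lam + 1) +
        LaurentPolynomial.C (poch 1 * poch (lam - 1)) * wloc (lam - 1) := by
  have hw1 : wloc 1 = LaurentPolynomial.T 1 + LaurentPolynomial.T (-1) := by
    unfold wloc
    rw [Finset.sum_range_succ, Finset.sum_range_one]
    have g10 : iQ (gb 1 ((0:ℕ):ℤ)) = 1 := gq_zero 1
    have g11 : iQ (gb 1 ((1:ℕ):ℤ)) = 1 := gq_diag 1
    rw [g10, g11, map_one]
    norm_num
  have hA : LaurentPolynomial.C (poch lam * poch 1) * (wloc lam * LaurentPolynomial.T 1)
      = ∑ p ∈ Finset.range (lam+2),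
          LaurentPolynomial.C ((poch lam * poch 1) * iQ (gb lam (p:ℤ))) *
            LaurentPolynomial.T ((lam:ℤ)+1-2*p) := by
    rw [show lam + 2 = (lam + 1) + 1 from rfl]
    conv_rhs => rw [Finset.sum_range_succ]
    have z1 : iQ (gb lam ((lam+1:ℕ):ℤ)) = 0 := by
      rw [gb_out lam _ (by push_cast; omega)]; exact map_zero iQ
    rw [z1, mul_zero, map_zero, zero_mul, add_zero]
    unfold wloc
    rw [Finset.sum_mul, Finset.mul_sum]
    apply Finset.sum_congr rfl
    intro p _
    rw [show (lam:ℤ)+1-2*(p:ℤ) = ((lam:ℤ)-2*p) + 1 by ring, LaurentPolynomial.T_add]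
    simp only [map_mul]
    ring
  have hB : LaurentPolynomial.C (poch lam * poch 1) * (wloc lam * LaurentPolynomial.T (-1))
      = ∑ p ∈ Finset.range (lam+2),
          LaurentPolynomial.C ((poch lam * poch 1) * iQ (gb lam ((p:ℤ)-1))) *
            LaurentPolynomial.T ((lam:ℤ)+1-2*p) := by
    rw [show lam + 2 = (lam + 1) + 1 from rfl]
    conv_rhs => rw [Finset.sum_range_succ']
    have z0 : iQ (gb lam (((0:ℕ):ℤ)-1)) = 0 := by
      rw [gb_out lam _ (by omega)]; exact map_zero iQ
    rw [z0, mul_zero, map_zero, zero_mul, add_zero]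
    unfold wloc
    rw [Finset.sum_mul, Finset.mul_sum]
    apply Finset.sum_congr rfl
    intro p _
    have hc : ((p+1:ℕ):ℤ) - 1 = (p:ℤ) := by push_cast; ring
    rw [hc, show (lam:ℤ)+1-2*((p+1:ℕ):ℤ) = ((lam:ℤ)-2*p) + (-1) by push_cast; ring,
      LaurentPolynomial.T_add]
    simp only [map_mul]
    ring
  have hC : LaurentPolynomial.C ((1 - RatFunc.X ^ (lam + 1)) / (1 - RatFunc.X) * poch (lam + 1))
        * wloc (lam+1)
      = ∑ p ∈ Finset.range (lam+2),
          LaurentPolynomial.C ((poch lam * poch 1) * iQ (gb (lam+1) (p:ℤ))) *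
            LaurentPolynomial.T ((lam:ℤ)+1-2*p) := by
    unfold wloc
    rw [Finset.mul_sum]
    apply Finset.sum_congr rfl
    intro p _
    rw [scalar1 lam, show ((lam+1:ℕ):ℤ) - 2*(p:ℤ) = (lam:ℤ)+1-2*p by push_cast; ring]
    simp only [map_mul]
    ring
  have hD : LaurentPolynomial.C (poch 1 * poch (lam-1)) * wloc (lam-1)
      = ∑ p ∈ Finset.range (lam+2),
          LaurentPolynomial.C ((poch lam * poch 1) *
              ((1 - RatFunc.X^lam) * iQ (gb (lam-1) ((p:ℤ)-1)))) *
            LaurentPolynomial.T ((lam:ℤ)+1-2*p) := by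
    rw [show lam + 2 = (lam + 1) + 1 from rfl]
    conv_rhs => rw [Finset.sum_range_succ]
    have z1 : iQ (gb (lam-1) (((lam+1:ℕ):ℤ)-1)) = 0 := by
      rw [gb_out (lam-1) _ (by
        have : ((lam-1:ℕ):ℤ) = (lam:ℤ) - 1 := by omega
        push_cast
        omega)]
      exact map_zero iQ
    rw [z1, mul_zero, mul_zero, map_zero, zero_mul, add_zero]
    conv_rhs => rw [Finset.sum_range_succ']
    have z0 : iQ (gb (lam-1) (((0:ℕ):ℤ)-1)) = 0 := by
      rw [gb_out (lam-1) _ (by omega)]; exact map_zero iQ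
    rw [z0, mul_zero, mul_zero, map_zero, zero_mul, add_zero]
    unfold wloc
    rw [Finset.mul_sum, (by omega : lam - 1 + 1 = lam)]
    apply Finset.sum_congr rfl
    intro p _
    have hc : ((p+1:ℕ):ℤ) - 1 = (p:ℤ) := by push_cast; ring
    have hl : ((lam-1:ℕ):ℤ) = (lam:ℤ) - 1 := by omega
    rw [hc, show (lam:ℤ)+1-2*((p+1:ℕ):ℤ) = ((lam:ℤ)-1)-2*p by push_cast; ring,
      scalar2 lam hlam, ← hl]
    simp only [map_mul]
    ring
  rw [hw1, mul_add (wloc lam), mul_add (LaurentPolynomial.C (poch lam * poch 1)),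
    hA, hB, hC, hD, ← Finset.sum_add_distrib, ← Finset.sum_add_distrib]
  apply Finset.sum_congr rfl
  intro p hp
  have hp' : p ≤ lam + 1 := by
    have := Finset.mem_range.mp hp; omega
  rw [← add_mul, ← add_mul, ← map_add, ← map_add]
  congr 2
  have hk := keyid lam p hlam hp'
  unfold gq at hk
  linear_combination (poch lam * poch 1) * hk
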